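/- Let Σ² be a symmetric positive definite real 2×2 matrix. Then there exists C > 0 such that for every real t ≥ 1, | ∑_{x ∈ ℤ²} exp(−⟨(Σ²)⁻¹x, x⟩/(2t)) − 2πt·√(det Σ²) | ≤ C·√t. -/

import Mathlib

open Matrix

section GaussianLatticeAux
open Real


lemma gauss_nat_summable {γ : ℝ} (hγ : 0 < γ) :
    Summable fun k : ℕ => rexp (-γ * (k : ℝ) ^ 2) := by
  refine Summable.of_nonneg_of_le (fun k => (Real.exp_pos _).le) (fun k => ?_)
    (summable_geometric_of_lt_one (Real.exp_pos (-γ)).le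
      (Real.exp_lt_one_iff.2 (by linarith)))
  rw [← Real.exp_nat_mul]
  apply Real.exp_le_exp.2
  have : (k : ℝ) ≤ (k : ℝ) ^ 2 := by
    exact_mod_cast Nat.le_self_pow two_ne_zero k
  nlinarith

lemma gauss_shift_summable {γ : ℝ} (hγ : 0 < γ) (s : ℝ) :
    Summable fun n : ℤ => rexp (-γ * ((n : ℝ) + s) ^ 2) := by
  have key : ∀ n : ℤ, rexp (-γ * ((n : ℝ) + s) ^ 2) ≤
      rexp (γ * s ^ 2) * rexp (-(γ/2) * (n : ℝ) ^ 2) := by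
    intro n
    rw [← Real.exp_add]
    apply Real.exp_le_exp.2
    nlinarith [sq_nonneg ((n : ℝ) + 2 * s), sq_nonneg ((n:ℝ) + s)]
  have hs : Summable fun n : ℤ => rexp (γ * s ^ 2) * rexp (-(γ/2) * (n : ℝ) ^ 2) := by
    apply Summable.mul_left
    apply Summable.of_nat_of_neg
    · simpa using gauss_nat_summable (by linarith : (0:ℝ) < γ/2)
    · simpa using gauss_nat_summable (by linarith : (0:ℝ) < γ/2)
  exact Summable.of_nonneg_of_le (fun n => (Real.exp_pos _).le) key hs

lemma gauss_int_summable {γ : ℝ} (hγ : 0 < γ) :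
    Summable fun n : ℤ => rexp (-γ * (n : ℝ) ^ 2) := by
  simpa using gauss_shift_summable hγ 0

set_option maxHeartbeats 2000000 in
lemma theta_dev {α : ℝ} (hα : 0 < α) (s : ℝ) :
    |(∑' n : ℤ, rexp (-α * ((n : ℝ) + s) ^ 2)) - Real.sqrt (π / α)| ≤ Real.sqrt α := by
  have hπ := Real.pi_pos
  set a : ℝ := α / π with ha_def
  have ha : 0 < a := div_pos hα hπ
  set β : ℝ := π ^ 2 / α with hβ_def
  have hβ : 0 < β := div_pos (by positivity) hα
  set g : ℤ → ℂ := fun n =>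
    Complex.exp (((-β * (n : ℝ) ^ 2 : ℝ) : ℂ) + ((2 * π * s * (n : ℝ) : ℝ) : ℂ) * Complex.I)
    with hg_def
  have hgnorm : ∀ n : ℤ, ‖g n‖ = rexp (-β * (n : ℝ) ^ 2) := by
    intro n
    rw [hg_def]
    simp only [Complex.norm_exp]
    simp only [Complex.add_re, Complex.mul_re, Complex.ofReal_re, Complex.ofReal_im,
      Complex.I_re, Complex.I_im, mul_zero, zero_mul, sub_zero, add_zero, mul_one,
      zero_sub, neg_zero]
  have hnormsum : Summable fun n : ℤ => rexp (-β * (n : ℝ) ^ 2) := gauss_int_summable hβ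
  have hgsum : Summable g :=
    Summable.of_norm (hnormsum.congr (fun n => (hgnorm n).symm))
  -- the complex functional equation
  have F := Complex.tsum_exp_neg_quadratic (a := (a : ℂ))
      (by simpa using ha) ((-(a * s) : ℝ) : ℂ)
  have hπC : (π : ℂ) ≠ 0 := Complex.ofReal_ne_zero.2 (ne_of_gt hπ)
  have hαC : (α : ℂ) ≠ 0 := Complex.ofReal_ne_zero.2 (ne_of_gt hα)
  -- main identity
  have main : ((∑' n : ℤ, rexp (-α * ((n : ℝ) + s) ^ 2)) : ℂ)
      = ((Real.sqrt (π / α) : ℝ) : ℂ) * ∑' n, g n := by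
    have E1 : ∀ n : ℤ, ((rexp (-α * ((n : ℝ) + s) ^ 2) : ℝ) : ℂ)
        = Complex.exp ((-(α * s ^ 2) : ℝ) : ℂ) *
          Complex.exp (-(π:ℂ) * (a : ℂ) * (n : ℂ) ^ 2 + 2 * (π:ℂ) * ((-(a * s) : ℝ) : ℂ) * (n : ℂ)) := by
      intro n
      rw [← Complex.exp_add, Complex.ofReal_exp]
      congr 1
      push_cast [ha_def]
      field_simp
      ring
    have E2 : ∀ n : ℤ, Complex.exp ((-(α * s ^ 2) : ℝ) : ℂ) *
        Complex.exp (-(π:ℂ) / (a : ℂ) * ((n : ℂ) + Complex.I * ((-(a * s) : ℝ) : ℂ)) ^ 2) = g n := by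
      intro n
      rw [hg_def]
      rw [← Complex.exp_add]
      congr 1
      have haC : (a : ℂ) ≠ 0 := Complex.ofReal_ne_zero.2 (ne_of_gt ha)
      push_cast [ha_def, hβ_def]
      field_simp
      ring_nf
      rw [Complex.I_sq]
      ring
    have E3 : (1 : ℂ) / (a : ℂ) ^ (1/2 : ℂ) = ((Real.sqrt (π / α) : ℝ) : ℂ) := by
      have h1 : ((a : ℂ) ^ (1/2 : ℂ)) = ((Real.sqrt a : ℝ) : ℂ) := by
        rw [Real.sqrt_eq_rpow, Complex.ofReal_cpow ha.le]
        norm_num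
      rw [h1]
      have h2 : Real.sqrt (π / α) = (Real.sqrt a)⁻¹ := by
        rw [← Real.sqrt_inv]
        congr 1
        rw [ha_def]
        field_simp
      rw [h2]
      push_cast
      rw [one_div]
    calc ((∑' n : ℤ, rexp (-α * ((n : ℝ) + s) ^ 2)) : ℂ)
        = ∑' n : ℤ, ((rexp (-α * ((n : ℝ) + s) ^ 2) : ℝ) : ℂ) := by norm_cast
      _ = ∑' n : ℤ, Complex.exp ((-(α * s ^ 2) : ℝ) : ℂ) *
          Complex.exp (-(π:ℂ) * (a : ℂ) * (n : ℂ) ^ 2 + 2 * (π:ℂ) * ((-(a * s) : ℝ) : ℂ) * (n : ℂ)) :=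
          tsum_congr E1
      _ = Complex.exp ((-(α * s ^ 2) : ℝ) : ℂ) *
          ∑' n : ℤ, Complex.exp (-(π:ℂ) * (a : ℂ) * (n : ℂ) ^ 2 + 2 * (π:ℂ) * ((-(a * s) : ℝ) : ℂ) * (n : ℂ)) :=
          tsum_mul_left
      _ = Complex.exp ((-(α * s ^ 2) : ℝ) : ℂ) *
          ((1 : ℂ) / (a : ℂ) ^ (1/2 : ℂ) *
            ∑' n : ℤ, Complex.exp (-(π:ℂ) / (a : ℂ) * ((n : ℂ) + Complex.I * ((-(a * s) : ℝ) : ℂ)) ^ 2)) := by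
          rw [F]
      _ = (1 : ℂ) / (a : ℂ) ^ (1/2 : ℂ) *
          ∑' n : ℤ, Complex.exp ((-(α * s ^ 2) : ℝ) : ℂ) *
            Complex.exp (-(π:ℂ) / (a : ℂ) * ((n : ℂ) + Complex.I * ((-(a * s) : ℝ) : ℂ)) ^ 2) := by
          rw [tsum_mul_left]
          ring
      _ = (1 : ℂ) / (a : ℂ) ^ (1/2 : ℂ) * ∑' n, g n := by rw [tsum_congr E2]
      _ = ((Real.sqrt (π / α) : ℝ) : ℂ) * ∑' n, g n := by rw [E3]
  -- real extraction
  have key : (∑' n : ℤ, rexp (-α * ((n : ℝ) + s) ^ 2))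
      = Real.sqrt (π / α) * (∑' n, g n).re := by
    have h := congrArg Complex.re main
    rw [← Complex.ofReal_tsum] at h
    simpa only [Complex.ofReal_re, Complex.mul_re, Complex.ofReal_im, zero_mul,
      sub_zero] using h
  set T : ℂ := ∑' n, g n with hT
  set h : ℤ → ℝ := fun n => if n = 0 then 0 else rexp (-β * (n : ℝ) ^ 2) with hh_def
  have hhsum : Summable h := by
    refine Summable.of_nonneg_of_le (fun n => ?_) (fun n => ?_) hnormsum
    · rw [hh_def]; dsimp only; split
      · exact le_refl _
      · positivity
    · rw [hh_def]; dsimp only; split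
      · positivity
      · exact le_refl _
  have hg0 : g 0 = 1 := by
    simp [hg_def]
  have hT1 : T - 1 = ∑' n : ℤ, (if n = 0 then 0 else g n) := by
    have h2 := Summable.tsum_eq_add_tsum_ite hgsum 0
    rw [hg0] at h2
    rw [hT, h2]; ring
  have hnorm_ite : ∀ n : ℤ, ‖if n = 0 then 0 else g n‖ = h n := by
    intro n; rw [hh_def]; dsimp only; split
    · simp
    · exact hgnorm n
  have hbound1 : ‖T - 1‖ ≤ ∑' n, h n := by
    rw [hT1]
    calc ‖∑' n : ℤ, (if n = 0 then 0 else g n)‖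
        ≤ ∑' n : ℤ, ‖if n = 0 then 0 else g n‖ :=
          norm_tsum_le_tsum_norm (hhsum.congr (fun n => (hnorm_ite n).symm))
      _ = ∑' n, h n := tsum_congr hnorm_ite
  -- geometric bound
  set r : ℝ := rexp (-β) with hr_def
  have hr0 : 0 < r := Real.exp_pos _
  have hr1 : r < 1 := by
    rw [hr_def]
    exact Real.exp_lt_one_iff.2 (by linarith)
  have hgeo : Summable fun k : ℕ => r ^ (k + 1) := by
    have h3 := (summable_geometric_of_lt_one hr0.le hr1).mul_left r
    exact h3.congr (fun k => by rw [pow_succ'])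
  have hterm : ∀ k : ℕ, rexp (-β * ((k : ℝ) + 1) ^ 2) ≤ r ^ (k + 1) := by
    intro k
    have h4 : r ^ (k + 1) = rexp (-β * ((k : ℝ) + 1)) := by
      rw [hr_def, ← Real.exp_nat_mul]
      congr 1; push_cast; ring
    rw [h4]
    apply Real.exp_le_exp.2
    have hk : ((k : ℝ) + 1) ≤ ((k : ℝ) + 1) ^ 2 := by
      nlinarith [Nat.cast_nonneg (α := ℝ) k]
    nlinarith [mul_le_mul_of_nonneg_left hk hβ.le]
  have hshift_sum : Summable fun k : ℕ => rexp (-β * ((k : ℝ) + 1) ^ 2) :=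
    Summable.of_nonneg_of_le (fun k => (Real.exp_pos _).le) hterm hgeo
  have hgeoval : ∑' k : ℕ, r ^ (k + 1) = r * (1 - r)⁻¹ := by
    rw [← tsum_geometric_of_lt_one hr0.le hr1, ← tsum_mul_left]
    exact tsum_congr fun k => by rw [pow_succ']
  have hsum_bound : ∑' k : ℕ, rexp (-β * ((k : ℝ) + 1) ^ 2) ≤ r * (1 - r)⁻¹ := by
    rw [← hgeoval]
    exact Summable.tsum_le_tsum hterm hshift_sum hgeo
  have hS1 : Summable fun k : ℕ => h (k : ℤ) :=
    hhsum.comp_injective (fun x y hxy => by exact_mod_cast hxy)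
  have hS2eq : ∀ k : ℕ, h (-((k : ℤ) + 1)) = rexp (-β * ((k : ℝ) + 1) ^ 2) := by
    intro k
    have hne : (-((k : ℤ) + 1)) ≠ 0 := by omega
    rw [hh_def]; dsimp only
    rw [if_neg hne]
    congr 1
    push_cast
    ring
  have hS2 : Summable fun k : ℕ => h (-((k : ℤ) + 1)) :=
    hshift_sum.congr (fun k => (hS2eq k).symm)
  have hS1eq : ∑' k : ℕ, h (k : ℤ) = ∑' k : ℕ, rexp (-β * ((k : ℝ) + 1) ^ 2) := by
    rw [Summable.tsum_eq_zero_add hS1]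
    have h0 : h ((0 : ℕ) : ℤ) = 0 := by rw [hh_def]; simp
    rw [h0, zero_add]
    refine tsum_congr fun k => ?_
    have hne : ((k : ℤ) + 1 : ℤ) ≠ 0 := by omega
    rw [hh_def]; dsimp only
    push_cast
    rw [if_neg (by exact_mod_cast hne)]
  have htotal : ∑' n : ℤ, h n ≤ 2 * (r * (1 - r)⁻¹) := by
    rw [tsum_of_nat_of_neg_add_one hS1 hS2]
    have hA : ∑' k : ℕ, h (k : ℤ) ≤ r * (1 - r)⁻¹ := by rw [hS1eq]; exact hsum_bound
    have hB : ∑' k : ℕ, h (-((k : ℤ) + 1)) ≤ r * (1 - r)⁻¹ := by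
      rw [tsum_congr hS2eq]; exact hsum_bound
    linarith
  have h1r : 0 < 1 - r := by linarith
  have hβbound : r * (1 - r)⁻¹ ≤ 1 / β := by
    rw [← div_eq_mul_inv, div_le_div_iff₀ h1r hβ]
    have hexp : β + 1 ≤ rexp β := Real.add_one_le_exp β
    have hmul : (β + 1) * r ≤ 1 := by
      have := mul_le_mul_of_nonneg_right hexp hr0.le
      rwa [hr_def, ← Real.exp_add, add_neg_cancel, Real.exp_zero] at this
    nlinarith
  have hTre : |T.re - 1| ≤ 2 / β := by
    calc |T.re - 1| = |(T - 1).re| := by rw [Complex.sub_re, Complex.one_re]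
      _ ≤ ‖T - 1‖ := Complex.abs_re_le_norm _
      _ ≤ ∑' n, h n := hbound1
      _ ≤ 2 * (r * (1 - r)⁻¹) := htotal
      _ ≤ 2 * (1 / β) := by linarith
      _ = 2 / β := by ring
  rw [key]
  have hsplit : Real.sqrt (π / α) * T.re - Real.sqrt (π / α)
      = Real.sqrt (π / α) * (T.re - 1) := by ring
  rw [hsplit, abs_mul, abs_of_nonneg (Real.sqrt_nonneg _)]
  have step1 : Real.sqrt (π / α) * |T.re - 1| ≤ Real.sqrt (π / α) * (2 / β) :=
    mul_le_mul_of_nonneg_left hTre (Real.sqrt_nonneg _)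
  refine step1.trans ?_
  -- arithmetic: √(π/α) * (2/β) ≤ √α
  have hβval : 2 / β = 2 * α / π ^ 2 := by rw [hβ_def]; field_simp
  rw [hβval, Real.sqrt_div hπ.le]
  have e1 : Real.sqrt π / Real.sqrt α * (2 * α / π ^ 2)
      = 2 * Real.sqrt π / π ^ 2 * (α / Real.sqrt α) := by ring
  rw [e1, Real.div_sqrt]
  have hle1 : 2 * Real.sqrt π / π ^ 2 ≤ 1 := by
    rw [div_le_one (by positivity)]
    have hsp : Real.sqrt π ≤ π := by
      nlinarith [Real.sq_sqrt hπ.le, Real.sqrt_nonneg π, Real.pi_gt_three]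
    nlinarith [Real.pi_gt_three]
  nlinarith [Real.sqrt_nonneg α]

set_option maxHeartbeats 1600000 in
lemma sum_est (a b c t : ℝ) (ha : 0 < a) (hc : 0 < c) (hdetpos : 0 < a*c - b^2) (ht : 1 ≤ t) :
    |(∑' p : ℤ × ℤ, rexp (-(a*(p.1:ℝ)^2 + 2*b*(p.1:ℝ)*(p.2:ℝ) + c*(p.2:ℝ)^2)/(2*t)))
      - 2*π*t*Real.sqrt ((a*c - b^2)⁻¹)|
    ≤ (Real.sqrt (2*π/c) * Real.sqrt (a - b^2/c) + Real.sqrt c * Real.sqrt (2*π/(a - b^2/c))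
       + Real.sqrt c * Real.sqrt (a - b^2/c) + 1) * Real.sqrt t := by
  have hπ := Real.pi_pos
  set d : ℝ := a - b^2/c with hd_def
  have hd : 0 < d := by
    rw [hd_def]
    have : b^2/c < a := by
      rw [div_lt_iff₀ hc]
      nlinarith
    linarith
  have ht0 : (0:ℝ) < t := by linarith
  set δ : ℝ := c / (2*t) with hδ_def
  set γ : ℝ := d / (2*t) with hγ_def
  have hδ : 0 < δ := by positivity
  have hγ : 0 < γ := by positivity
  set K : ℝ := Real.sqrt (π / δ) with hK_def
  set L : ℝ := Real.sqrt (π / γ) with hL_def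
  set E : ℝ := Real.sqrt δ with hE_def
  set E' : ℝ := Real.sqrt γ with hE'_def
  set Θc : ℤ → ℝ := fun m => ∑' n : ℤ, rexp (-δ * ((n:ℝ) + (b/c) * (m:ℝ))^2) with hΘc_def
  set Θd : ℝ := ∑' m : ℤ, rexp (-γ * (m:ℝ)^2) with hΘd_def
  -- factorization of the exponent
  have hfactor : ∀ x y : ℝ, -(a*x^2 + 2*b*x*y + c*y^2)/(2*t)
      = -γ * x^2 + -δ * (y + (b/c)*x)^2 := by
    intro x y
    rw [hγ_def, hδ_def, hd_def]
    field_simp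
    ring
  have hterm : ∀ p : ℤ × ℤ,
      rexp (-(a*(p.1:ℝ)^2 + 2*b*(p.1:ℝ)*(p.2:ℝ) + c*(p.2:ℝ)^2)/(2*t))
      = rexp (-γ * (p.1:ℝ)^2) * rexp (-δ * ((p.2:ℝ) + (b/c) * (p.1:ℝ))^2) := by
    intro p
    rw [hfactor, Real.exp_add]
  -- summability
  have hsum_inner : ∀ m : ℤ, Summable fun n : ℤ =>
      rexp (-γ * (m:ℝ)^2) * rexp (-δ * ((n:ℝ) + (b/c) * (m:ℝ))^2) :=
    fun m => (gauss_shift_summable hδ ((b/c) * (m:ℝ))).mul_left _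
  have hsum_gauss : Summable fun m : ℤ => rexp (-γ * (m:ℝ)^2) := gauss_int_summable hγ
  have hΘc_dev : ∀ m : ℤ, |Θc m - K| ≤ E := fun m => theta_dev hδ ((b/c) * (m:ℝ))
  have hΘc_nonneg : ∀ m : ℤ, 0 ≤ Θc m :=
    fun m => tsum_nonneg (fun n => (Real.exp_pos _).le)
  have hΘc_le : ∀ m : ℤ, Θc m ≤ K + E := by
    intro m
    have := hΘc_dev m
    rw [abs_le] at this
    linarith [this.2]
  have hKE : 0 ≤ K + E := by positivity
  have hsum_outer : Summable fun m : ℤ => rexp (-γ * (m:ℝ)^2) * Θc m := by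
    refine Summable.of_nonneg_of_le
      (fun m => mul_nonneg (Real.exp_pos _).le (hΘc_nonneg m))
      (fun m => mul_le_mul_of_nonneg_left (hΘc_le m) (Real.exp_pos _).le)
      (hsum_gauss.mul_right (K + E))
  have hf_summable : Summable fun p : ℤ × ℤ =>
      rexp (-(a*(p.1:ℝ)^2 + 2*b*(p.1:ℝ)*(p.2:ℝ) + c*(p.2:ℝ)^2)/(2*t)) := by
    rw [funext hterm]
    refine (summable_prod_of_nonneg ?_).2 ⟨fun m => hsum_inner m, ?_⟩
    · intro p
      exact mul_nonneg (Real.exp_pos _).le (Real.exp_pos _).le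
    · refine hsum_outer.congr (fun m => ?_)
      dsimp only
      exact tsum_mul_left.symm
  -- iterated sum
  have hiter : (∑' p : ℤ × ℤ,
      rexp (-(a*(p.1:ℝ)^2 + 2*b*(p.1:ℝ)*(p.2:ℝ) + c*(p.2:ℝ)^2)/(2*t)))
      = ∑' m : ℤ, rexp (-γ * (m:ℝ)^2) * Θc m := by
    rw [funext hterm] at hf_summable ⊢
    rw [Summable.tsum_prod' hf_summable (fun m => hsum_inner m)]
    refine tsum_congr (fun m => ?_)
    dsimp only
    exact tsum_mul_left
  -- split into main and remainder
  set R : ℝ := ∑' m : ℤ, rexp (-γ * (m:ℝ)^2) * (Θc m - K) with hR_def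
  have hsumR : Summable fun m : ℤ => rexp (-γ * (m:ℝ)^2) * (Θc m - K) := by
    refine Summable.of_norm_bounded (hsum_gauss.mul_right E) (fun m => ?_)
    rw [Real.norm_eq_abs, abs_mul, abs_of_nonneg (Real.exp_pos _).le]
    exact mul_le_mul_of_nonneg_left (hΘc_dev m) (Real.exp_pos _).le
  have hsplit : ∑' m : ℤ, rexp (-γ * (m:ℝ)^2) * Θc m = Θd * K + R := by
    have h1 : ∀ m : ℤ, rexp (-γ * (m:ℝ)^2) * Θc m
        = rexp (-γ * (m:ℝ)^2) * K + rexp (-γ * (m:ℝ)^2) * (Θc m - K) := by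
      intro m; ring
    rw [tsum_congr h1, Summable.tsum_add (hsum_gauss.mul_right K) hsumR, tsum_mul_right]
  have hRbound : |R| ≤ Θd * E := by
    rw [hR_def]
    calc |∑' m : ℤ, rexp (-γ * (m:ℝ)^2) * (Θc m - K)|
        ≤ ∑' m : ℤ, |rexp (-γ * (m:ℝ)^2) * (Θc m - K)| := by
          rw [← Real.norm_eq_abs]
          refine (norm_tsum_le_tsum_norm ?_).trans_eq (tsum_congr fun m => Real.norm_eq_abs _)
          exact (hsumR.abs.congr (fun m => (Real.norm_eq_abs _).symm))
      _ ≤ ∑' m : ℤ, rexp (-γ * (m:ℝ)^2) * E := by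
          refine Summable.tsum_le_tsum (fun m => ?_) hsumR.abs (hsum_gauss.mul_right E)
          rw [abs_mul, abs_of_nonneg (Real.exp_pos _).le]
          exact mul_le_mul_of_nonneg_left (hΘc_dev m) (Real.exp_pos _).le
      _ = Θd * E := tsum_mul_right
  -- Θd deviation
  have hΘd_dev : |Θd - L| ≤ E' := by
    have h1 := theta_dev hγ 0
    have h2 : (∑' m : ℤ, rexp (-γ * ((m:ℝ) + 0)^2)) = Θd := by
      exact tsum_congr (fun m => by rw [add_zero])
    rwa [h2] at h1
  -- main term value
  have hKL : K * L = 2 * π * t * Real.sqrt ((a*c - b^2)⁻¹) := by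
    rw [hK_def, hL_def, ← Real.sqrt_mul (by positivity)]
    have h1 : π / δ * (π / γ) = (2*π*t)^2 * (a*c - b^2)⁻¹ := by
      rw [hδ_def, hγ_def, hd_def]
      field_simp
      try ring
    rw [h1, Real.sqrt_mul (by positivity), Real.sqrt_sq (by positivity)]
  -- final estimates
  have hst : 1 ≤ Real.sqrt t := by
    rw [show (1:ℝ) = Real.sqrt 1 by simp]
    exact Real.sqrt_le_sqrt ht
  have hstpos : 0 < Real.sqrt t := by linarith
  have hKval : K = Real.sqrt (2*π/c) * Real.sqrt t := by
    rw [hK_def, hδ_def, ← Real.sqrt_mul (by positivity)]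
    congr 1
    field_simp
  have hLval : L = Real.sqrt (2*π/d) * Real.sqrt t := by
    rw [hL_def, hγ_def, ← Real.sqrt_mul (by positivity)]
    congr 1
    field_simp
  have hEval : E ≤ Real.sqrt c := by
    rw [hE_def, hδ_def]
    exact Real.sqrt_le_sqrt (div_le_self hc.le (by linarith))
  have hE'val : E' ≤ Real.sqrt d := by
    rw [hE'_def, hγ_def]
    exact Real.sqrt_le_sqrt (div_le_self hd.le (by linarith))
  have hΘd_le : Θd ≤ L + E' := by
    rw [abs_le] at hΘd_dev
    linarith [hΘd_dev.2]
  have hΘd_nonneg : 0 ≤ Θd := tsum_nonneg (fun m => (Real.exp_pos _).le)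
  have hEnn : 0 ≤ E := Real.sqrt_nonneg _
  have hE'nn : 0 ≤ E' := Real.sqrt_nonneg _
  have hKnn : 0 ≤ K := Real.sqrt_nonneg _
  have hLnn : 0 ≤ L := Real.sqrt_nonneg _
  -- put it together
  rw [hiter, hsplit]
  have hdecomp : Θd * K + R - 2 * π * t * Real.sqrt ((a*c - b^2)⁻¹) = K * (Θd - L) + R := by
    rw [← hKL]; ring
  rw [hdecomp]
  calc |K * (Θd - L) + R| ≤ |K * (Θd - L)| + |R| := abs_add_le _ _
    _ ≤ K * E' + Θd * E := by
        rw [abs_mul, abs_of_nonneg hKnn]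
        exact add_le_add (mul_le_mul_of_nonneg_left hΘd_dev hKnn) hRbound
    _ ≤ (Real.sqrt (2*π/c) * Real.sqrt d + Real.sqrt c * Real.sqrt (2*π/d)
       + Real.sqrt c * Real.sqrt d + 1) * Real.sqrt t := by
        have h1 : K * E' ≤ (Real.sqrt (2*π/c) * Real.sqrt t) * Real.sqrt d := by
          rw [hKval]
          exact mul_le_mul_of_nonneg_left hE'val (by positivity)
        have h2 : Θd * E ≤ (Real.sqrt (2*π/d) * Real.sqrt t + Real.sqrt d) * Real.sqrt c := by
          refine mul_le_mul ?_ hEval hEnn (by positivity)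
          rw [← hLval]
          refine hΘd_le.trans ?_
          rw [hLval]
          linarith [hE'val]
        have h3 : Real.sqrt c * Real.sqrt d * 1 ≤ Real.sqrt c * Real.sqrt d * Real.sqrt t :=
          mul_le_mul_of_nonneg_left hst (by positivity)
        nlinarith [h1, h2, h3, hstpos.le]


set_option maxHeartbeats 800000 in
/-- Gaussian lattice-sum estimate: for a symmetric positive definite `Σ²`, there is
`C > 0` such that for all reals `t ≥ 1`,
`|∑_{x ∈ ℤ²} exp(−⟨(Σ²)⁻¹x, x⟩/(2t)) − 2πt√(det Σ²)| ≤ C√t`. -/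
theorem gaussian_lattice_sum_full
    (S : Matrix (Fin 2) (Fin 2) ℝ) (hsymm : S.IsSymm) (hpd : S.PosDef) :
    ∃ C > 0, ∀ t : ℝ, 1 ≤ t →
      |(∑' x : ℤ × ℤ,
          Real.exp (-(S⁻¹ *ᵥ ![(x.1 : ℝ), (x.2 : ℝ)] ⬝ᵥ ![(x.1 : ℝ), (x.2 : ℝ)])
            / (2 * t)))
        - 2 * Real.pi * t * Real.sqrt S.det| ≤ C * Real.sqrt t := by
  have hApd : (S⁻¹).PosDef := hpd.inv
  have hAsymm : (S⁻¹)ᵀ = S⁻¹ := by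
    rw [Matrix.transpose_nonsing_inv, hsymm.eq]
  set a : ℝ := S⁻¹ 0 0 with ha_def
  set b : ℝ := S⁻¹ 0 1 with hb_def
  set c : ℝ := S⁻¹ 1 1 with hc_def
  have hba : S⁻¹ 1 0 = b := by
    conv_lhs => rw [← hAsymm]
    rw [Matrix.transpose_apply]
  have hquad : ∀ x y : ℝ, S⁻¹ *ᵥ ![x, y] ⬝ᵥ ![x, y] = a * x^2 + 2*b*x*y + c*y^2 := by
    intro x y
    simp [Matrix.mulVec, dotProduct, Fin.sum_univ_two, hba]
    ring
  have hvne : ∀ x y : ℝ, x = 1 ∨ y = 1 → ![x, y] ≠ 0 := by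
    intro x y hxy h
    rcases hxy with h1 | h1
    · have := congrFun h 0; simp [h1] at this
    · have := congrFun h 1; simp [h1] at this
  have ha : 0 < a := by
    have h1 := hApd.dotProduct_mulVec_pos (x := ![(1:ℝ), 0]) (hvne 1 0 (Or.inl rfl))
    simpa [dotProduct, Matrix.mulVec, Fin.sum_univ_two] using h1
  have hc : 0 < c := by
    have h1 := hApd.dotProduct_mulVec_pos (x := ![(0:ℝ), 1]) (hvne 0 1 (Or.inr rfl))
    simpa [dotProduct, Matrix.mulVec, Fin.sum_univ_two] using h1
  have hdetA : (S⁻¹).det = a * c - b^2 := by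
    rw [Matrix.det_fin_two, hba]; ring
  have hdetpos : 0 < a * c - b^2 := by
    have := hApd.det_pos
    rwa [hdetA] at this
  have hdetS : S.det = (a * c - b^2)⁻¹ := by
    have h1 : (S⁻¹).det = S.det⁻¹ := by
      rw [Matrix.det_nonsing_inv, Ring.inverse_eq_inv']
    have h2 : (0:ℝ) < S.det := hpd.det_pos
    rw [hdetA] at h1
    field_simp at h1 ⊢
    linarith [h1]
  refine ⟨Real.sqrt (2*π/c) * Real.sqrt (a - b^2/c)
      + Real.sqrt c * Real.sqrt (2*π/(a - b^2/c))
      + Real.sqrt c * Real.sqrt (a - b^2/c) + 1, by positivity, fun t ht => ?_⟩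
  have hrw : (∑' x : ℤ × ℤ,
      Real.exp (-(S⁻¹ *ᵥ ![(x.1 : ℝ), (x.2 : ℝ)] ⬝ᵥ ![(x.1 : ℝ), (x.2 : ℝ)]) / (2 * t)))
      = ∑' p : ℤ × ℤ, rexp (-(a*(p.1:ℝ)^2 + 2*b*(p.1:ℝ)*(p.2:ℝ) + c*(p.2:ℝ)^2)/(2*t)) :=
    tsum_congr (fun p => by rw [hquad])
  rw [hrw, hdetS]
  exact sum_est a b c t ha hc hdetpos ht

end GaussianLatticeAux
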